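/- Variance of the entries of a constructed tensor ring: fix natural numbers d ≥ 1, R ≥ 1, and I₁,…,I_d ≥ 1, and let the family of all entries {U^(k)(a, i, b) : 1 ≤ k ≤ d, a, b ∈ Fin R, i ∈ Fin I_k} be independent, identically distributed real random variables, each with mean 0, variance σ², and finite second moment. For fixed indices i₁ ∈ Fin I₁, …, i_d ∈ Fin I_d, define the corresponding entry of the constructed tensor X = ∑_{r₀, r₁, …, r_{d-1} ∈ Fin R} U^(1)(r₀, i₁, r₁)·U^(2)(r₁, i₂, r₂)·⋯·U^(d)(r_{d-1}, i_d, r₀). Then E[X] = 0 and Var[X] = R^d·σ^{2d}. -/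

import Mathlib

open MeasureTheory ProbabilityTheory Finset

lemma my_iIndepFun_congr {Ω ι : Type*} [MeasurableSpace Ω] {μ : Measure Ω} {f g : ι → Ω → ℝ}
    (h : iIndepFun f μ)
    (hfg : ∀ i, f i =ᵐ[μ] g i) :
    iIndepFun g μ := by
  rw [iIndepFun_iff_measure_inter_preimage_eq_mul] at h ⊢
  intro S sets hsets
  have hae : ∀ᵐ ω ∂μ, ∀ i ∈ S, f i ω = g i ω :=
    (ae_ball_iff S.countable_toSet).mpr fun i _ => hfg i
  have h1 : (⋂ i ∈ S, g i ⁻¹' sets i) =ᵐ[μ] (⋂ i ∈ S, f i ⁻¹' sets i) := by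
    filter_upwards [hae] with ω hω
    have : (ω ∈ ⋂ i ∈ S, g i ⁻¹' sets i) ↔ (ω ∈ ⋂ i ∈ S, f i ⁻¹' sets i) := by
      simp only [Set.mem_iInter, Set.mem_preimage]
      exact ⟨fun hg i hi => by rw [hω i hi]; exact hg i hi,
        fun hf' i hi => by rw [← hω i hi]; exact hf' i hi⟩
    exact eq_iff_iff.mpr this
  have h2 : ∀ i ∈ S, μ (g i ⁻¹' sets i) = μ (f i ⁻¹' sets i) := by
    intro i hi
    refine measure_congr ?_
    filter_upwards [hfg i] with ω hω
    exact (congrArg (· ∈ sets i) hω).symm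
  rw [measure_congr h1, h S hsets]
  exact (Finset.prod_congr rfl h2).symm

lemma my_indep_prod_integral {Ω ι : Type*} [MeasurableSpace Ω] {μ : Measure Ω}
    [IsProbabilityMeasure μ] {f : ι → Ω → ℝ}
    (hindep : iIndepFun f μ)
    (hmeas : ∀ j, Measurable (f j)) (hint : ∀ j, Integrable (f j) μ) (S : Finset ι) :
    Integrable (fun ω => ∏ j ∈ S, f j ω) μ ∧
      ∫ ω, ∏ j ∈ S, f j ω ∂μ = ∏ j ∈ S, ∫ ω, f j ω ∂μ := by
  classical
  induction S using Finset.induction_on with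
  | empty => simp
  | insert a S hj ih =>
    have hpair : IndepFun (fun ω => ∏ j ∈ S, f j ω) (f a) μ := by
      have := hindep.indepFun_finset_prod_of_notMem hmeas hj
      have hps : (∏ j ∈ S, f j) = fun ω => ∏ j ∈ S, f j ω := by
        funext ω; simp [Finset.prod_apply]
      rwa [hps] at this
    have hSm : Measurable fun ω => ∏ j ∈ S, f j ω := Finset.measurable_prod _ fun j _ => hmeas j
    have hint2 : Integrable (fun ω => (∏ j ∈ S, f j ω) * f a ω) μ :=
      hpair.integrable_mul ih.1 (hint a)
    have hintegral : (∫ ω, (∏ j ∈ S, f j ω) * f a ω ∂μ)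
        = (∫ ω, ∏ j ∈ S, f j ω ∂μ) * ∫ ω, f a ω ∂μ :=
      hpair.integral_mul_eq_mul_integral hSm.aestronglyMeasurable (hmeas a).aestronglyMeasurable
    have hins : ∀ ω, ∏ j ∈ insert a S, f j ω = (∏ j ∈ S, f j ω) * f a ω := fun ω => by
      rw [Finset.prod_insert hj, mul_comm]
    constructor
    · exact hint2.congr (by filter_upwards with ω; rw [hins ω])
    · rw [show (∫ ω, ∏ j ∈ insert a S, f j ω ∂μ) = ∫ ω, (∏ j ∈ S, f j ω) * f a ω ∂μ from
        integral_congr_ae (by filter_upwards with ω; rw [hins ω])]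
      rw [hintegral, ih.2, Finset.prod_insert hj, mul_comm]

/-- Variance of an entry of a constructed tensor ring: if all entries of the `d`
third-order factors `U^(k) ∈ ℝ^{R × I_k × R}` are i.i.d. real random variables with
mean 0, variance `σ²`, and finite second moment, then the entry
`X = ∑_{r₀,…,r_{d-1}} U^(1)(r₀,i₁,r₁)·U^(2)(r₁,i₂,r₂)⋯U^(d)(r_{d-1},i_d,r₀)`
of the constructed tensor has mean 0 and variance `R^d · σ^(2d)`. -/
theorem tensor_ring_entry_mean_variance {Ω : Type*} [MeasurableSpace Ω]
    {μ : Measure Ω} [IsProbabilityMeasure μ]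
    (d R : ℕ) [NeZero d] (hd : 1 ≤ d) (hR : 1 ≤ R) (I : Fin d → ℕ) (hI : ∀ k, 1 ≤ I k)
    (σ : ℝ)
    (U : ∀ k : Fin d, Fin R → Fin (I k) → Fin R → Ω → ℝ)
    (hindep : iIndepFun
      (fun j : Σ k : Fin d, Fin R × Fin (I k) × Fin R => U j.1 j.2.1 j.2.2.1 j.2.2.2) μ)
    (hident : ∀ j j' : Σ k : Fin d, Fin R × Fin (I k) × Fin R,
      IdentDistrib (U j.1 j.2.1 j.2.2.1 j.2.2.2) (U j'.1 j'.2.1 j'.2.2.1 j'.2.2.2) μ μ)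
    (hL2 : ∀ j : Σ k : Fin d, Fin R × Fin (I k) × Fin R,
      MemLp (U j.1 j.2.1 j.2.2.1 j.2.2.2) 2 μ)
    (hmean : ∀ j : Σ k : Fin d, Fin R × Fin (I k) × Fin R,
      ∫ ω, U j.1 j.2.1 j.2.2.1 j.2.2.2 ω ∂μ = 0)
    (hvar : ∀ j : Σ k : Fin d, Fin R × Fin (I k) × Fin R,
      variance (U j.1 j.2.1 j.2.2.1 j.2.2.2) μ = σ ^ 2)
    (i : ∀ k : Fin d, Fin (I k))
    (X : Ω → ℝ)
    (hX : X = fun ω => ∑ r : Fin d → Fin R, ∏ k : Fin d, U k (r k) (i k) (r (k + 1)) ω) :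
    (∫ ω, X ω ∂μ = 0) ∧ variance X μ = (R : ℝ) ^ d * σ ^ (2 * d) := by
  classical
  set ι := (Σ k : Fin d, Fin R × Fin (I k) × Fin R) with hιdef
  set f : ι → Ω → ℝ := fun j => U j.1 j.2.1 j.2.2.1 j.2.2.2 with hfdef
  set g : ι → Ω → ℝ := fun j => (hL2 j).1.mk (f j) with hgdef
  have hgsm : ∀ j, StronglyMeasurable (g j) := fun j => (hL2 j).1.stronglyMeasurable_mk
  have hgm : ∀ j, Measurable (g j) := fun j => (hgsm j).measurable
  have hfg : ∀ j, f j =ᵐ[μ] g j := fun j => (hL2 j).1.ae_eq_mk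
  have hgindep : iIndepFun g μ :=
    my_iIndepFun_congr hindep hfg
  have hgL2 : ∀ j, MemLp (g j) 2 μ := fun j => (hL2 j).ae_eq (hfg j)
  have hgint : ∀ j, Integrable (g j) μ := fun j => (hgL2 j).integrable one_le_two
  have hgmean : ∀ j, ∫ ω, g j ω ∂μ = 0 := fun j =>
    (integral_congr_ae (hfg j).symm).trans (hmean j)
  have hgsq : ∀ j, ∫ ω, (g j ω) ^ 2 ∂μ = σ ^ 2 := by
    intro j
    have h1 := variance_eq_sub (hL2 j)
    rw [hvar j, hmean j] at h1
    have h2 : ∫ ω, (f j ω) ^ 2 ∂μ = σ ^ 2 := by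
      have h3 : (μ[U j.1 j.2.1 j.2.2.1 j.2.2.2 ^ 2]) = ∫ ω, (f j ω) ^ 2 ∂μ := rfl
      rw [h3] at h1
      linarith
    rw [← h2]
    exact integral_congr_ae ((hfg j).mono fun ω hω => by show g j ω ^ 2 = f j ω ^ 2; rw [hω])
  -- index maps
  set e : (Fin d → Fin R) → Fin d → ι := fun r k => ⟨k, (r k, i k, r (k + 1))⟩ with hedef
  have he_inj : ∀ r, Function.Injective (e r) := by
    intro r k k' h
    exact congrArg Sigma.fst h
  have hcol : ∀ (r s : Fin d → Fin R) (k k' : Fin d), e r k = e s k' → k = k' ∧ r k = s k' := by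
    intro r s k k' h
    have hk : k = k' := congrArg Sigma.fst h
    subst hk
    refine ⟨rfl, ?_⟩
    have h2 : HEq (r k, i k, r (k + 1)) (s k, i k, s (k + 1)) := (Sigma.mk.inj_iff.mp h).2
    have h3 : (r k, i k, r (k + 1)) = (s k, i k, s (k + 1)) := eq_of_heq h2
    exact (Prod.mk.injEq _ _ _ _).mp h3 |>.1
  set A : (Fin d → Fin R) → Finset ι := fun r => Finset.univ.image (e r) with hAdef
  have hAcard : ∀ r, (A r).card = d := by
    intro r
    rw [hAdef]
    simp [Finset.card_image_of_injective _ (he_inj r)]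
  have hAne : ∀ r, (A r).Nonempty := fun r => by
    rw [← Finset.card_pos, hAcard r]; exact Nat.lt_of_lt_of_le Nat.zero_lt_one hd
  set P : (Fin d → Fin R) → Ω → ℝ := fun r ω => ∏ k, g (e r k) ω with hPdef
  have hP_eq : ∀ r ω, P r ω = ∏ j ∈ A r, g j ω := by
    intro r ω
    show (∏ k : Fin d, g (e r k) ω) = ∏ j ∈ Finset.univ.image (e r), g j ω
    rw [Finset.prod_image (fun x _ y _ h => he_inj r h)]
  -- mean of each P r
  have hPint : ∀ r, Integrable (P r) μ ∧ ∫ ω, P r ω ∂μ = 0 := by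
    intro r
    have h := my_indep_prod_integral hgindep hgm hgint (A r)
    obtain ⟨j₀, hj₀⟩ := hAne r
    constructor
    · exact h.1.congr (by filter_upwards with ω; rw [hP_eq r ω])
    · rw [show (∫ ω, P r ω ∂μ) = ∫ ω, ∏ j ∈ A r, g j ω ∂μ from
        integral_congr_ae (by filter_upwards with ω; rw [hP_eq r ω])]
      rw [h.2]
      exact Finset.prod_eq_zero hj₀ (hgmean j₀)
  -- the measurable version of X
  set X' : Ω → ℝ := fun ω => ∑ r : Fin d → Fin R, P r ω with hX'def
  have hXX' : X =ᵐ[μ] X' := by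
    have hall : ∀ᵐ ω ∂μ, ∀ j : ι, f j ω = g j ω := ae_all_iff.mpr hfg
    filter_upwards [hall] with ω hω
    rw [hX, hX'def]
    exact Finset.sum_congr rfl fun r _ =>
      Finset.prod_congr rfl fun k _ => hω (e r k)
  have hX'mean : ∫ ω, X' ω ∂μ = 0 := by
    rw [hX'def]
    rw [integral_finset_sum _ fun r _ => (hPint r).1]
    simp [(fun r => (hPint r).2)]
  have hmean0 : ∫ ω, X ω ∂μ = 0 := (integral_congr_ae hXX').trans hX'mean
  refine ⟨hmean0, ?_⟩
  -- products P r * P s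
  have hprod : ∀ r s : Fin d → Fin R, Integrable (fun ω => P r ω * P s ω) μ ∧
      ∫ ω, P r ω * P s ω ∂μ = if r = s then σ ^ (2 * d) else 0 := by
    intro r s
    set c : ι → ℕ := fun j => (if j ∈ A r then 1 else 0) + (if j ∈ A s then 1 else 0) with hcdef
    have hpt : ∀ ω, P r ω * P s ω = ∏ j ∈ A r ∪ A s, g j ω ^ c j := by
      intro ω
      rw [hP_eq r ω, hP_eq s ω]
      simp only [hcdef, pow_add, Finset.prod_mul_distrib, pow_ite, pow_one, pow_zero]
      rw [Finset.prod_ite_mem (A r ∪ A s) (A r) (fun j => g j ω),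
        Finset.prod_ite_mem (A r ∪ A s) (A s) (fun j => g j ω),
        Finset.union_inter_cancel_left, Finset.union_inter_cancel_right]
    set h : ι → Ω → ℝ := fun j ω => g j ω ^ c j with hhdef
    have hhindep : iIndepFun h μ := by
      have := hgindep.comp (fun j (x : ℝ) => x ^ c j) (fun j => measurable_id.pow_const (c j))
      exact this
    have hhm : ∀ j, Measurable (h j) := fun j => (hgm j).pow_const (c j)
    have hhint : ∀ j, Integrable (h j) μ := by
      intro j
      have hc : c j ≤ 2 := by
        rw [hcdef]; dsimp only
        split_ifs <;> norm_num
      have hc3 : c j = 0 ∨ c j = 1 ∨ c j = 2 := by omega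
      rcases hc3 with h0 | h0 | h0
      · simp only [hhdef, h0, pow_zero]; exact integrable_const 1
      · simp only [hhdef, h0, pow_one]; exact hgint j
      · simp only [hhdef, h0]; exact (hgL2 j).integrable_sq
    have hmain := my_indep_prod_integral hhindep hhm hhint (A r ∪ A s)
    constructor
    · exact hmain.1.congr (by filter_upwards with ω; rw [← hpt ω])
    · rw [show (∫ ω, P r ω * P s ω ∂μ) = ∫ ω, ∏ j ∈ A r ∪ A s, h j ω ∂μ from
        integral_congr_ae (by filter_upwards with ω; rw [hpt ω])]
      rw [hmain.2]
      by_cases hrs : r = s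
      · subst hrs
        rw [if_pos rfl, Finset.union_self]
        have : ∀ j ∈ A r, (∫ ω, h j ω ∂μ) = σ ^ 2 := by
          intro j hj
          have : c j = 2 := by rw [hcdef]; simp [hj]
          rw [hhdef]; dsimp only; rw [this]
          exact hgsq j
        rw [Finset.prod_congr rfl this, Finset.prod_const, hAcard r, ← pow_mul]
      · rw [if_neg hrs]
        obtain ⟨k₀, hk₀⟩ := Function.ne_iff.mp hrs
        set j₀ : ι := e r k₀ with hj₀def
        have hj₀A : j₀ ∈ A r := Finset.mem_image_of_mem _ (Finset.mem_univ k₀)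
        have hj₀B : j₀ ∉ A s := by
          intro hmem
          obtain ⟨k', -, hk'⟩ := Finset.mem_image.mp hmem
          obtain ⟨hke, hval⟩ := hcol s r k' k₀ hk'
          subst hke
          exact hk₀ hval.symm
        refine Finset.prod_eq_zero (Finset.mem_union_left _ hj₀A) ?_
        have hc1 : c j₀ = 1 := by rw [hcdef]; simp [hj₀A, hj₀B]
        show (∫ ω, g j₀ ω ^ c j₀ ∂μ) = 0
        simp only [hc1, pow_one]
        exact hgmean j₀
  -- L² bounds
  have hPsq : ∀ r, MemLp (P r) 2 μ := by
    intro r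
    have hm : Measurable (P r) := Finset.measurable_prod _ fun k _ => hgm (e r k)
    refine (memLp_two_iff_integrable_sq hm.aestronglyMeasurable).mpr ?_
    refine (hprod r r).1.congr ?_
    filter_upwards with ω
    exact (sq (P r ω)).symm
  have hX'L2 : MemLp X' 2 μ := memLp_finset_sum _ fun r _ => hPsq r
  have hXL2 : MemLp X 2 μ := hX'L2.ae_eq hXX'.symm
  rw [variance_eq_sub hXL2, hmean0]
  have hsq : (μ[X ^ 2] : ℝ) = (R : ℝ) ^ d * σ ^ (2 * d) := by
    have h1 : (μ[X ^ 2] : ℝ) = ∫ ω, (X' ω) ^ 2 ∂μ := by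
      refine integral_congr_ae ?_
      filter_upwards [hXX'] with ω hω
      show X ω ^ 2 = X' ω ^ 2
      rw [hω]
    rw [h1]
    have h2 : ∀ ω, (X' ω) ^ 2 = ∑ r : Fin d → Fin R, ∑ s : Fin d → Fin R, P r ω * P s ω := by
      intro ω
      rw [hX'def]
      dsimp only
      rw [sq, Finset.sum_mul_sum]
    rw [show (∫ ω, (X' ω) ^ 2 ∂μ) = ∫ ω, ∑ r : Fin d → Fin R, ∑ s : Fin d → Fin R,
        P r ω * P s ω ∂μ from integral_congr_ae (by filter_upwards with ω; rw [h2 ω])]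
    rw [integral_finset_sum _ fun r _ => integrable_finset_sum _ fun s _ => (hprod r s).1]
    have h3 : ∀ r : Fin d → Fin R, (∫ ω, ∑ s : Fin d → Fin R, P r ω * P s ω ∂μ) = σ ^ (2 * d) := by
      intro r
      rw [integral_finset_sum _ fun s _ => (hprod r s).1]
      rw [Finset.sum_congr rfl fun s _ => (hprod r s).2]
      simp
    rw [Finset.sum_congr rfl fun r _ => h3 r]
    rw [Finset.sum_const, nsmul_eq_mul]
    congr 1
    rw [Finset.card_univ, Fintype.card_fun, Fintype.card_fin, Fintype.card_fin]
    push_cast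
    ring
  rw [hsq]
  ring
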